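/- Let A be a polynomial algebra (over a field of characteristic zero) equipped with an action of a finite group W by algebra automorphisms. Suppose p, p' ∈ A with p ≠ 0 are such that the fraction p'/p is W-invariant (i.e. s(p')·p = s(p)·p' for all s ∈ W). Let q be a maximal W-invariant divisor of p^{|W|} (a W-invariant divisor of p^{|W|} of maximal degree). Then there exists q' ∈ A^W such that p'/p = q'/q, i.e. p'·q = p·q'. -/

import Mathlib

set_option maxHeartbeats 1000000

open UniqueFactorizationMonoid in
theorem aux_dvd_of_forall_prime {R : Type*} [CommMonoidWithZero R]
    [UniqueFactorizationMonoid R] {x y : R} (hx : x ≠ 0) (hy : y ≠ 0)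
    (h : ∀ π : R, Prime π → emultiplicity π x ≤ emultiplicity π y) : x ∣ y := by
  classical
  letI : StrongNormalizationMonoid R := UniqueFactorizationMonoid.normalizationMonoid
  rw [dvd_iff_normalizedFactors_le_normalizedFactors hx hy, Multiset.le_iff_count]
  intro a
  by_cases ha : a ∈ normalizedFactors x
  · have hai : Irreducible a := irreducible_of_normalized_factor _ ha
    have hn : normalize a = a := normalize_normalized_factor _ ha
    have h1 := emultiplicity_eq_count_normalizedFactors hai hx
    have h2 := emultiplicity_eq_count_normalizedFactors hai hy
    rw [hn] at h1 h2
    have := h a (irreducible_iff_prime.mp hai)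
    rw [h1, h2] at this
    exact_mod_cast this
  · simp [Multiset.count_eq_zero_of_notMem ha]

open MvPolynomial in
theorem aux_homogeneousComponent_totalDegree_ne_zero {σ k : Type*} [CommSemiring k]
    {f : MvPolynomial σ k} (hf : f ≠ 0) :
    homogeneousComponent f.totalDegree f ≠ 0 := by
  classical
  obtain ⟨d, hd, hsup⟩ := Finset.exists_mem_eq_sup f.support
    (MvPolynomial.support_nonempty.mpr hf) (fun s => s.sum fun _ e => e)
  rw [MvPolynomial.ne_zero_iff]
  refine ⟨d, ?_⟩
  rw [coeff_homogeneousComponent, if_pos]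
  · exact MvPolynomial.mem_support_iff.mp hd
  · show d.degree = f.totalDegree
    rw [MvPolynomial.totalDegree, hsup]
    rfl

open MvPolynomial in
theorem aux_totalDegree_mul {σ k : Type*} [CommRing k] [IsDomain k]
    {f g : MvPolynomial σ k} (hf : f ≠ 0) (hg : g ≠ 0) :
    (f * g).totalDegree = f.totalDegree + g.totalDegree := by
  classical
  refine le_antisymm (totalDegree_mul f g) ?_
  set a := f.totalDegree with ha
  set b := g.totalDegree with hb
  set F := homogeneousComponent a f with hF
  set G := homogeneousComponent b g with hG
  have hF0 : F ≠ 0 := aux_homogeneousComponent_totalDegree_ne_zero hf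
  have hG0 : G ≠ 0 := aux_homogeneousComponent_totalDegree_ne_zero hg
  obtain ⟨d, hd⟩ := MvPolynomial.ne_zero_iff.mp (mul_ne_zero hF0 hG0)
  have hhom : (F * G).IsHomogeneous (a + b) :=
    (homogeneousComponent_isHomogeneous a f).mul (homogeneousComponent_isHomogeneous b g)
  have hdeg : d.degree = a + b := by
    have := hhom hd
    rw [Finsupp.degree_eq_weight_one]; exact this
  have hcoeff : MvPolynomial.coeff d (f * g) = MvPolynomial.coeff d (F * G) := by
    rw [MvPolynomial.coeff_mul, MvPolynomial.coeff_mul]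
    refine Finset.sum_congr rfl ?_
    rintro ⟨u, v⟩ huv
    have huvd : u + v = d := Finset.HasAntidiagonal.mem_antidiagonal.mp huv
    have hsum : u.degree + v.degree = a + b := by
      have h2 : (u + v).degree = u.degree + v.degree := by
        simp [Finsupp.degree_eq_weight_one, map_add]
      rw [huvd, hdeg] at h2
      omega
    by_cases hu : u.degree = a
    · have hv : v.degree = b := by omega
      simp only [hF, hG, coeff_homogeneousComponent, if_pos hu, if_pos hv]
    · rcases lt_or_gt_of_ne hu with hlt | hgt
      · have hv : b < v.degree := by omega
        have : MvPolynomial.coeff v g = 0 := by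
          apply coeff_eq_zero_of_totalDegree_lt
          exact hv
        simp only [hF, hG, coeff_homogeneousComponent, this, mul_zero]
        rw [if_neg (by omega)]
        simp
      · have : MvPolynomial.coeff u f = 0 := by
          apply coeff_eq_zero_of_totalDegree_lt
          exact hgt
        simp only [hF, hG, coeff_homogeneousComponent, this, zero_mul]
        rw [if_neg (by omega)]
        simp
  have hmem : d ∈ (f * g).support := by
    rw [MvPolynomial.mem_support_iff, hcoeff]; exact hd
  calc a + b = d.degree.succ - 1 := by omega
    _ ≤ (f * g).totalDegree := by
        have := le_totalDegree hmem
        have hdd : (d.sum fun _ e => e) = d.degree := rfl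
        omega

/-- Let `A` be a polynomial algebra over a field of characteristic zero with an action of a
finite group `W` by algebra automorphisms.  If `p'/p` is `W`-invariant and `q` is a maximal
`W`-invariant divisor of `p ^ |W|`, then `p'/p = q'/q` for some `W`-invariant `q'`. -/
theorem stmt1 {σ k : Type} [Field k] [CharZero k]
    {W : Type} [Group W] [Fintype W]
    [MulSemiringAction W (MvPolynomial σ k)]
    (hC : ∀ (s : W) (c : k), s • (MvPolynomial.C c : MvPolynomial σ k) = MvPolynomial.C c)
    (p p' q : MvPolynomial σ k) (hp : p ≠ 0)
    (hinv : ∀ s : W, s • p' * p = s • p * p')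
    (hqdvd : q ∣ p ^ Fintype.card W)
    (hqinv : ∀ s : W, s • q = q)
    (hqmax : ∀ q₂ : MvPolynomial σ k, q₂ ∣ p ^ Fintype.card W →
      (∀ s : W, s • q₂ = q₂) → q₂.totalDegree ≤ q.totalDegree) :
    ∃ q' : MvPolynomial σ k, (∀ s : W, s • q' = q') ∧ p' * q = p * q' := by
  classical
  set N := Fintype.card W with hN
  -- basic facts about the action
  have hsmul0 : ∀ (s : W) (x : MvPolynomial σ k), s • x = 0 → x = 0 := by
    intro s x h
    have := congrArg (fun y => s⁻¹ • y) h
    simpa using this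
  have hsdvd : ∀ (s : W) (x y : MvPolynomial σ k), x ∣ y → s • x ∣ s • y := by
    rintro s x y ⟨c, rfl⟩
    exact ⟨s • c, by rw [smul_mul']⟩
  have hsdvd_iff : ∀ (s : W) (x y : MvPolynomial σ k), s • x ∣ s • y ↔ x ∣ y := by
    intro s x y
    refine ⟨fun h => ?_, hsdvd s x y⟩
    have := hsdvd s⁻¹ _ _ h
    simpa using this
  have hprime : ∀ (s : W) (π : MvPolynomial σ k), Prime π → Prime (s • π) := by
    intro s π hπ
    refine ⟨fun h => hπ.ne_zero (hsmul0 s π h), fun h => ?_, fun a b hab => ?_⟩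
    · obtain ⟨v, hv⟩ := isUnit_iff_exists_inv.mp h
      refine hπ.not_unit (isUnit_iff_exists_inv.mpr ⟨s⁻¹ • v, ?_⟩)
      have := congrArg (fun y => s⁻¹ • y) hv
      simpa [smul_mul'] using this
    · have h1 : π ∣ s⁻¹ • a * s⁻¹ • b := by
        rw [← smul_mul']
        have := hsdvd s⁻¹ _ _ hab
        simpa using this
      rcases hπ.2.2 _ _ h1 with h2 | h2
      · left
        have := hsdvd s _ _ h2
        simpa using this
      · right
        have := hsdvd s _ _ h2
        simpa using this
  have hmult : ∀ (s : W) (π x : MvPolynomial σ k),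
      emultiplicity (s • π) (s • x) = emultiplicity π x := by
    intro s π x
    refine emultiplicity_eq_emultiplicity_iff.mpr fun n => ?_
    rw [← smul_pow']
    exact hsdvd_iff s _ _
  -- trivial case p' = 0
  rcases eq_or_ne p' 0 with rfl | hp'0
  · exact ⟨0, fun s => smul_zero s, by ring⟩
  have hq0 : q ≠ 0 := by
    rintro rfl
    exact pow_ne_zero N hp (zero_dvd_iff.mp hqdvd)
  -- the key divisibility
  have key : p ∣ p' * q := by
    refine aux_dvd_of_forall_prime hp (mul_ne_zero hp'0 hq0) ?_
    intro π hπ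
    by_contra hlt
    push_neg at hlt
    rw [emultiplicity_mul hπ] at hlt
    have hπ0 : π ≠ 0 := hπ.ne_zero
    -- orbit inequalities
    have horb : ∀ s : W, emultiplicity π q + 1 ≤ emultiplicity (s • π) p := by
      intro s
      by_contra hle
      push_neg at hle
      have hle' : emultiplicity (s • π) p ≤ emultiplicity π q := Order.le_of_lt_add_one hle
      have e1 : emultiplicity (s • π) (s • p' * p) = emultiplicity (s • π) (s • p * p') := by
        rw [hinv s]
      rw [emultiplicity_mul (hprime s π hπ), emultiplicity_mul (hprime s π hπ),
        hmult, hmult] at e1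
      have hlt2 : emultiplicity π p' + emultiplicity (s • π) p
          < emultiplicity π p + emultiplicity (s • π) p' := by
        calc emultiplicity π p' + emultiplicity (s • π) p
            ≤ emultiplicity π p' + emultiplicity π q := add_le_add_right hle' _
          _ < emultiplicity π p := hlt
          _ ≤ emultiplicity π p + emultiplicity (s • π) p' := le_self_add
      exact absurd e1 (ne_of_lt hlt2)
    have horbq : ∀ s : W, emultiplicity (s • π) q = emultiplicity π q := by
      intro s
      conv_lhs => rw [← hqinv s]
      rw [hmult]
    -- the competitor
    set R : MvPolynomial σ k := ∏ s : W, s • π with hR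
    have hR0 : R ≠ 0 := Finset.prod_ne_zero_iff.mpr fun s _ => (hprime s π hπ).ne_zero
    set Q : MvPolynomial σ k := q * R with hQ
    have hQ0 : Q ≠ 0 := mul_ne_zero hq0 hR0
    have hQinv : ∀ t : W, t • Q = Q := by
      intro t
      have h1 : t • R = R := by
        rw [hR]
        rw [show t • (∏ s : W, s • π) = ∏ s : W, t • (s • π) from
          map_prod (MulSemiringAction.toRingHom W (MvPolynomial σ k) t) _ _]
        simp_rw [← mul_smul]
        exact Fintype.prod_equiv (Equiv.mulLeft t) _ _ (fun s => rfl)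
      rw [hQ, smul_mul', hqinv t, h1]
    have hQdvd : Q ∣ p ^ N := by
      refine aux_dvd_of_forall_prime hQ0 (pow_ne_zero _ hp) ?_
      intro ρ hρ
      rw [emultiplicity_pow hρ, hQ, emultiplicity_mul hρ, hR, Finset.emultiplicity_prod hρ]
      by_cases hex : ∃ s : W, ρ ∣ s • π
      · obtain ⟨s0, hs0⟩ := hex
        have hassoc : Associated ρ (s0 • π) := hρ.associated_of_dvd (hprime s0 π hπ) hs0
        have hrw : ∀ x : MvPolynomial σ k, emultiplicity ρ x = emultiplicity (s0 • π) x :=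
          fun x => (emultiplicity_eq_of_associated_left hassoc).symm
        have hone : ∀ s : W, emultiplicity ρ (s • π) ≤ 1 := by
          intro s
          by_cases hdvd : ρ ∣ s • π
          · have hassoc2 : Associated ρ (s • π) := hρ.associated_of_dvd (hprime s π hπ) hdvd
            rw [← emultiplicity_eq_of_associated_right hassoc2]
            have hfin : FiniteMultiplicity ρ ρ :=
              FiniteMultiplicity.of_not_isUnit hρ.not_unit hρ.ne_zero
            rw [hfin.emultiplicity_self]
          · rw [emultiplicity_eq_zero.mpr hdvd]
            exact zero_le_one
        have hsum : (∑ s : W, emultiplicity ρ (s • π)) ≤ (N : ℕ∞) := by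
          calc (∑ s : W, emultiplicity ρ (s • π)) ≤ ∑ _s : W, (1 : ℕ∞) :=
              Finset.sum_le_sum fun s _ => hone s
            _ = (N : ℕ∞) := by simp [hN, Finset.card_univ]
        have hqm : emultiplicity ρ q = emultiplicity π q := by rw [hrw q, horbq s0]
        have hpm : emultiplicity π q + 1 ≤ emultiplicity ρ p := by
          rw [hrw p]; exact horb s0
        have hN1 : (1 : ℕ∞) ≤ (N : ℕ∞) := by
          exact_mod_cast Nat.one_le_iff_ne_zero.mpr (by simp [hN, Fintype.card_ne_zero])
        calc emultiplicity ρ q + ∑ s : W, emultiplicity ρ (s • π)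
            ≤ emultiplicity π q + (N : ℕ∞) := add_le_add hqm.le hsum
          _ ≤ (N : ℕ∞) * (emultiplicity π q + 1) := by
              rw [mul_add, mul_one]
              exact add_le_add_left (le_mul_of_one_le_left' hN1) _
          _ ≤ (N : ℕ∞) * emultiplicity ρ p := mul_le_mul_right hpm _
      · push_neg at hex
        have hzero : ∀ s : W, emultiplicity ρ (s • π) = 0 := fun s =>
          emultiplicity_eq_zero.mpr (hex s)
        have hq' : emultiplicity ρ q ≤ (N : ℕ∞) * emultiplicity ρ p := by
          have := emultiplicity_le_emultiplicity_of_dvd_right hqdvd (a := ρ)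
          rwa [emultiplicity_pow hρ] at this
        simp only [hzero, Finset.sum_const_zero, add_zero]
        exact hq'
    -- degree contradiction
    have hmax := hqmax Q hQdvd hQinv
    have hdegQ : Q.totalDegree = q.totalDegree + R.totalDegree :=
      aux_totalDegree_mul hq0 hR0
    have hπdvdR : π ∣ R := by
      rw [hR]
      have : (1 : W) • π = π := one_smul _ _
      calc π = (1 : W) • π := this.symm
        _ ∣ ∏ s : W, s • π := Finset.dvd_prod_of_mem _ (Finset.mem_univ _)
    have hπdeg : 1 ≤ π.totalDegree := by
      rcases Nat.eq_zero_or_pos π.totalDegree with h0 | h1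
      · exfalso
        have hπC : π = MvPolynomial.C (MvPolynomial.coeff 0 π) := by
          ext d
          rcases eq_or_ne d 0 with rfl | hd0
          · simp
          · rw [MvPolynomial.coeff_C, if_neg (Ne.symm hd0)]
            by_contra hne
            have hd : d ∈ π.support := MvPolynomial.mem_support_iff.mpr hne
            have hall := (MvPolynomial.totalDegree_eq_zero_iff σ π).mp h0 d hd
            exact hd0 (Finsupp.ext fun x => hall x)
        have hc0 : MvPolynomial.coeff 0 π ≠ 0 := by
          intro h
          exact hπ.ne_zero (by rw [hπC, h, map_zero])
        exact hπ.not_unit (hπC ▸ (IsUnit.mk0 _ hc0).map (MvPolynomial.C : k →+* MvPolynomial σ k))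
      · exact h1
    have hRdeg : 1 ≤ R.totalDegree := by
      obtain ⟨c, hc⟩ := hπdvdR
      have hc0 : c ≠ 0 := by rintro rfl; rw [mul_zero] at hc; exact hR0 hc
      have := aux_totalDegree_mul hπ.ne_zero hc0
      rw [← hc] at this
      omega
    omega
  obtain ⟨q', hq'⟩ := key
  refine ⟨q', ?_, hq'⟩
  intro s
  have hsp : s • p ≠ 0 := fun h => hp (hsmul0 s p h)
  have h1 : s • p' * q = s • p * s • q' := by
    have := congrArg (fun y => s • y) hq'
    simpa [smul_mul', hqinv s] using this
  have h2 : s • p * (p * s • q') = s • p * (p * q') := by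
    calc s • p * (p * s • q') = p * (s • p * s • q') := by ring
      _ = p * (s • p' * q) := by rw [← h1]
      _ = (s • p' * p) * q := by ring
      _ = (s • p * p') * q := by rw [hinv s]
      _ = s • p * (p' * q) := by ring
      _ = s • p * (p * q') := by rw [hq']
  have h3 := mul_left_cancel₀ hsp h2
  exact mul_left_cancel₀ hp h3
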